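/- For positive integers n and k with k ∈ K_n and k < n/2, the number of permutations of {1, ..., n} whose order equals exactly n - k is at least n!/(n-k). -/

import Mathlib

open Equiv Equiv.Perm Finset
open Fin.NatCast

private def permCongrMul {α β : Type*} (e : α ≃ β) : Perm α ≃* Perm β :=
  { e.permCongr with
    map_mul' := fun x y => by
      ext b
      simp [Equiv.permCongr_apply, Equiv.Perm.mul_apply] }

private lemma permCongrMul_apply {α β : Type*} (e : α ≃ β) (p : Perm α) :
    permCongrMul e p = e.permCongr p := rfl

private lemma finRotate_pow_apply (m i : ℕ) (a : Fin (m + 1)) :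
    ((finRotate (m + 1)) ^ i) a = a + (i : Fin (m + 1)) := by
  induction i with
  | zero => simp
  | succ i ih =>
    rw [pow_succ', Equiv.Perm.mul_apply, ih, finRotate_succ_apply, Nat.cast_succ]
    exact add_assoc _ _ _

private lemma finRotate_reaches {m : ℕ} (hm : m ≠ 0) (a j : Fin m) :
    ∃ i : ℕ, ((finRotate m) ^ i) a = j := by
  obtain ⟨m, rfl⟩ := Nat.exists_eq_succ_of_ne_zero hm
  exact ⟨(j - a : Fin (m + 1)).val, by
    rw [finRotate_pow_apply, Fin.cast_val_eq_self, add_comm, sub_add_cancel]⟩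

private lemma sumCongr_pow {αt βt : Type*} (a : Equiv.Perm αt) (b : Equiv.Perm βt) (i : ℕ) :
    (Equiv.sumCongr a b) ^ i = Equiv.sumCongr (a ^ i) (b ^ i) := by
  induction i with
  | zero => simp
  | succ i ih => rw [pow_succ, pow_succ, pow_succ, ih, Equiv.Perm.sumCongr_mul]

private lemma centralizer_rotate_ext {m : ℕ} (hm : m ≠ 0) {α α' : Perm (Fin m)}
    (h : α * finRotate m = finRotate m * α) (h' : α' * finRotate m = finRotate m * α')
    (z : Fin m) (h0 : α z = α' z) : α = α' := by
  refine Equiv.ext fun a => ?_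
  obtain ⟨i, hi⟩ := finRotate_reaches hm z a
  have hc : α * (finRotate m) ^ i = (finRotate m) ^ i * α :=
    (Commute.pow_right (h : Commute α (finRotate m)) i)
  have hc' : α' * (finRotate m) ^ i = (finRotate m) ^ i * α' :=
    (Commute.pow_right (h' : Commute α' (finRotate m)) i)
  calc α a = (α * (finRotate m) ^ i) z := by rw [Equiv.Perm.mul_apply, hi]
    _ = ((finRotate m) ^ i) (α z) := by rw [hc, Equiv.Perm.mul_apply]
    _ = ((finRotate m) ^ i) (α' z) := by rw [h0]
    _ = (α' * (finRotate m) ^ i) z := by rw [hc', Equiv.Perm.mul_apply]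
    _ = α' a := by rw [Equiv.Perm.mul_apply, hi]

private lemma conj_sumCongr_structure {m k : ℕ} (hkm : k < m)
    {d : Perm (Fin m ⊕ Fin k)} {τ τ₀ : Perm (Fin k)}
    (hd : d * (Equiv.sumCongr (finRotate m) τ) * d⁻¹ = Equiv.sumCongr (finRotate m) τ₀) :
    ∃ (α : Perm (Fin m)) (β : Perm (Fin k)),
      d = Equiv.sumCongr α β ∧ α * finRotate m = finRotate m * α ∧ β * τ * β⁻¹ = τ₀ := by
  have hm : m ≠ 0 := by omega
  have hsemi : d * Equiv.sumCongr (finRotate m) τ = Equiv.sumCongr (finRotate m) τ₀ * d := by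
    rw [← hd]; group
  have hmaps : Set.MapsTo d (Set.range Sum.inl) (Set.range Sum.inl) := by
    rintro x ⟨a, rfl⟩
    by_contra hcon
    obtain ⟨b, hb⟩ : ∃ b, d (Sum.inl a) = Sum.inr b := by
      rcases hx : d (Sum.inl a) with a' | b
      · exact absurd ⟨a', hx.symm⟩ hcon
      · exact ⟨b, rfl⟩
    have key : ∀ j : Fin m, ∃ b' : Fin k, d (Sum.inl j) = Sum.inr b' := by
      intro j
      obtain ⟨i, hi⟩ := finRotate_reaches hm a j
      have hp : ((Equiv.sumCongr (finRotate m) τ) ^ i) (Sum.inl a) = Sum.inl j := by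
        rw [sumCongr_pow]; simp [hi]
      have hsemi2 : d * (Equiv.sumCongr (finRotate m) τ) ^ i
          = (Equiv.sumCongr (finRotate m) τ₀) ^ i * d := SemiconjBy.pow_right hsemi i
      have hkey : d (Sum.inl j) = ((Equiv.sumCongr (finRotate m) τ₀) ^ i) (d (Sum.inl a)) := by
        rw [← hp, ← Equiv.Perm.mul_apply, hsemi2, Equiv.Perm.mul_apply]
      rw [hb, sumCongr_pow] at hkey
      exact ⟨(τ₀ ^ i) b, by simpa using hkey⟩
    choose f hf using key
    have hfinj : Function.Injective f := by
      intro j j' hjj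
      have hdd : d (Sum.inl j) = d (Sum.inl j') := by rw [hf j, hf j', hjj]
      exact Sum.inl_injective (d.injective hdd)
    have hcard := Fintype.card_le_of_injective f hfinj
    simp only [Fintype.card_fin] at hcard
    omega
  obtain ⟨⟨α, β⟩, hαβ⟩ := Equiv.Perm.mem_sumCongrHom_range_of_perm_mapsTo_inl hmaps
  rw [Equiv.Perm.sumCongrHom_apply] at hαβ
  have hconj : Equiv.sumCongr (α * finRotate m * α⁻¹) (β * τ * β⁻¹)
      = Equiv.sumCongr (finRotate m) τ₀ := by
    rw [← hd, ← hαβ]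
    simp [Equiv.Perm.sumCongr_mul, Equiv.Perm.sumCongr_inv]
  have hpair := Equiv.Perm.sumCongrHom_injective
    (show Equiv.Perm.sumCongrHom (Fin m) (Fin k) (α * finRotate m * α⁻¹, β * τ * β⁻¹)
        = Equiv.Perm.sumCongrHom (Fin m) (Fin k) (finRotate m, τ₀) by
      simpa [Equiv.Perm.sumCongrHom_apply] using hconj)
  have h1 : α * finRotate m * α⁻¹ = finRotate m := congrArg Prod.fst hpair
  have h2 : β * τ * β⁻¹ = τ₀ := congrArg Prod.snd hpair
  exact ⟨α, β, hαβ.symm, mul_inv_eq_iff_eq_mul.mp h1, h2⟩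

theorem stmt_1 (n k : ℕ) (hn : 0 < n) (hk : 0 < k)
    (hK : k < n ∧ (Finset.Icc 1 k).lcm id ∣ n - k)
    (hhalf : 2 * k < n) :
    Nat.factorial n / (n - k) ≤
      Nat.card {π : Equiv.Perm (Fin n) // orderOf π = n - k} := by
  classical
  obtain ⟨hkn, hdvd⟩ := hK
  set m := n - k with hm_def
  have hkm : k < m := by omega
  have hm2 : 2 ≤ m := by omega
  have hm0 : m ≠ 0 := by omega
  haveI : NeZero m := ⟨hm0⟩
  have hmk : m + k = n := by omega
  set e : Fin m ⊕ Fin k ≃ Fin n := finSumFinEquiv.trans (finCongr hmk) with he_def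
  set E : Perm (Fin m ⊕ Fin k) ≃* Perm (Fin n) := permCongrMul e with hE_def
  set Φ : Perm (Fin n) × Perm (Fin k) → Perm (Fin n) :=
    fun x => x.1 * E (Equiv.sumCongr (finRotate m) x.2) * x.1⁻¹ with hΦ_def
  have hordc : orderOf (finRotate m) = m := by
    rw [(isCycle_finRotate_of_le hm2).orderOf, support_finRotate_of_le hm2, Finset.card_univ,
      Fintype.card_fin]
  have hΦord : ∀ x, orderOf (Φ x) = m := by
    rintro ⟨σ, τ⟩
    have h1 : orderOf (Φ (σ, τ)) = orderOf (E (Equiv.sumCongr (finRotate m) τ)) := by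
      refine (SemiconjBy.orderOf_eq σ ?_).symm
      show σ * _ = _ * σ
      simp only [hΦ_def]
      group
    rw [h1, MulEquiv.orderOf_eq]
    have h2 : orderOf (Equiv.sumCongr (finRotate m) τ)
        = orderOf ((finRotate m, τ) : Perm (Fin m) × Perm (Fin k)) := by
      have hr : Equiv.sumCongr (finRotate m) τ
          = Equiv.Perm.sumCongrHom (Fin m) (Fin k) (finRotate m, τ) := rfl
      rw [hr, orderOf_injective _ Equiv.Perm.sumCongrHom_injective]
    rw [h2, Prod.orderOf, hordc]
    have hτ : orderOf τ ∣ m := by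
      refine dvd_trans ?_ hdvd
      rw [← Equiv.Perm.lcm_cycleType]
      refine Multiset.lcm_dvd.mpr fun i hi => ?_
      have h2i := Equiv.Perm.two_le_of_mem_cycleType hi
      have hik : i ≤ k := le_trans (Equiv.Perm.le_card_support_of_mem_cycleType hi)
        (le_trans (Finset.card_le_univ _) (by simp))
      have : (i : ℕ) ∣ (Finset.Icc 1 k).lcm id :=
        Finset.dvd_lcm (by simp only [Finset.mem_Icc]; omega)
      simpa using this
    exact Nat.dvd_antisymm (Nat.lcm_dvd dvd_rfl hτ) (Nat.dvd_lcm_left _ _)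
  have fiber : ∀ π ∈ Finset.univ.image Φ,
      (Finset.univ.filter fun x => Φ x = π).card ≤ m * Nat.factorial k := by
    intro π hπ
    obtain ⟨x₀, _, hx₀⟩ := Finset.mem_image.mp hπ
    obtain ⟨σ₀, τ₀⟩ := x₀
    set F : Perm (Fin n) × Perm (Fin k) → Fin m × Perm (Fin k) := fun x =>
      ((Function.invFun (Equiv.Perm.sumCongrHom (Fin m) (Fin k)) (E.symm (σ₀⁻¹ * x.1))).1 0,
       (Function.invFun (Equiv.Perm.sumCongrHom (Fin m) (Fin k)) (E.symm (σ₀⁻¹ * x.1))).2)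
      with hF_def
    have key : ∀ x ∈ Finset.univ.filter fun x => Φ x = π,
        ∃ (α : Perm (Fin m)) (β : Perm (Fin k)),
          α * finRotate m = finRotate m * α
          ∧ F x = (α 0, β) ∧ x.1 = σ₀ * E (Equiv.sumCongr α β) ∧ β * x.2 * β⁻¹ = τ₀ := by
      rintro ⟨σ, τ⟩ hx
      have hΦx : Φ (σ, τ) = Φ (σ₀, τ₀) := (Finset.mem_filter.mp hx).2.trans hx₀.symm
      simp only [hΦ_def] at hΦx
      have hconj : (σ₀⁻¹ * σ) * E (Equiv.sumCongr (finRotate m) τ) * (σ₀⁻¹ * σ)⁻¹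
          = E (Equiv.sumCongr (finRotate m) τ₀) := by
        have h := congrArg (fun g => σ₀⁻¹ * g * σ₀) hΦx
        calc (σ₀⁻¹ * σ) * E (Equiv.sumCongr (finRotate m) τ) * (σ₀⁻¹ * σ)⁻¹
            = σ₀⁻¹ * (σ * E (Equiv.sumCongr (finRotate m) τ) * σ⁻¹) * σ₀ := by group
          _ = σ₀⁻¹ * (σ₀ * E (Equiv.sumCongr (finRotate m) τ₀) * σ₀⁻¹) * σ₀ := by rw [h]
          _ = E (Equiv.sumCongr (finRotate m) τ₀) := by group
      have hd : (E.symm (σ₀⁻¹ * σ)) * (Equiv.sumCongr (finRotate m) τ)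
          * (E.symm (σ₀⁻¹ * σ))⁻¹ = Equiv.sumCongr (finRotate m) τ₀ := by
        have h2 := congrArg E.symm hconj
        simpa only [map_mul, map_inv, MulEquiv.symm_apply_apply] using h2
      obtain ⟨α, β, hsum, hcomm, hβ⟩ := conj_sumCongr_structure hkm hd
      have hinv : Function.invFun (Equiv.Perm.sumCongrHom (Fin m) (Fin k))
          (E.symm (σ₀⁻¹ * σ)) = (α, β) := by
        have hr : Equiv.sumCongr α β = Equiv.Perm.sumCongrHom (Fin m) (Fin k) (α, β) := rfl
        rw [hsum, hr]
        exact Function.leftInverse_invFun Equiv.Perm.sumCongrHom_injective (α, β)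
      refine ⟨α, β, hcomm, ?_, ?_, hβ⟩
      · simp only [hF_def, hinv]
      · have h3 : σ₀⁻¹ * σ = E (Equiv.sumCongr α β) := (MulEquiv.symm_apply_eq E).mp hsum
        rw [← h3]
        group
    have hinj : Set.InjOn F (Finset.univ.filter fun x => Φ x = π) := by
      intro x hx y hy hFxy
      obtain ⟨α, β, hcomm, hFx, hx1, hx2⟩ := key x hx
      obtain ⟨α', β', hcomm', hFy, hy1, hy2⟩ := key y hy
      rw [hFx, hFy, Prod.mk.injEq] at hFxy
      obtain ⟨h0, hββ⟩ := hFxy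
      have hαα : α = α' := centralizer_rotate_ext hm0 hcomm hcomm' 0 h0
      have h1 : x.1 = y.1 := by rw [hx1, hy1, hαα, hββ]
      have h2 : x.2 = y.2 := by
        have hc : β * x.2 * β⁻¹ = β * y.2 * β⁻¹ := by rw [hx2, hββ, hy2]
        have := mul_right_cancel hc
        exact mul_left_cancel this
      exact Prod.ext h1 h2
    calc (Finset.univ.filter fun x => Φ x = π).card
        ≤ (Finset.univ : Finset (Fin m × Perm (Fin k))).card :=
          Finset.card_le_card_of_injOn F (fun _ _ => Finset.mem_univ _) hinj
      _ = m * Nat.factorial k := by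
          simp [Finset.card_univ, Fintype.card_prod, Fintype.card_perm, Fintype.card_fin]
  have hbig := Finset.card_le_mul_card_image (f := Φ) Finset.univ (m * Nat.factorial k) fiber
  have hunivcard : (Finset.univ : Finset (Perm (Fin n) × Perm (Fin k))).card
      = Nat.factorial n * Nat.factorial k := by
    simp [Finset.card_univ, Fintype.card_prod, Fintype.card_perm, Fintype.card_fin]
  set N := (Finset.univ.filter fun π : Perm (Fin n) => orderOf π = m).card with hN_def
  have himage : (Finset.univ.image Φ).card ≤ N := by
    apply Finset.card_le_card
    intro π hπ
    obtain ⟨x, _, rfl⟩ := Finset.mem_image.mp hπ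
    simp [Finset.mem_filter, hΦord x]
  have hN : Nat.card {π : Perm (Fin n) // orderOf π = n - k} = N := by
    rw [Nat.card_eq_fintype_card, Fintype.card_subtype]
  have hfin : Nat.factorial n * Nat.factorial k ≤ (m * N) * Nat.factorial k := by
    calc Nat.factorial n * Nat.factorial k ≤ (m * Nat.factorial k) * (Finset.univ.image Φ).card :=
          hunivcard ▸ hbig
      _ ≤ (m * Nat.factorial k) * N := Nat.mul_le_mul_left _ himage
      _ = (m * N) * Nat.factorial k := by ring
  have hle : Nat.factorial n ≤ m * N :=
    Nat.le_of_mul_le_mul_right hfin (Nat.factorial_pos k)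
  rw [hN]
  calc Nat.factorial n / m ≤ (m * N) / m := Nat.div_le_div_right hle
    _ = N := Nat.mul_div_cancel_left N (by omega)
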